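/- arXiv:2511.23382 — 4 statements merged into one kernel-verified Lean document; each statement's English description precedes it below -/
import Mathlib

section
/- Let S be a complete DVR with uniformizer t and residue field k, let I' ⊆ S⟦x₁,…,xₙ⟧ be an ideal such that R = S⟦x₁,…,xₙ⟧/I' is flat over S, and let I ⊆ k⟦x₁,…,xₙ⟧ be the image of I' under reduction modulo t, assumed to be a finitely generated prime ideal. Then I' is a prime ideal. -/
open MvPowerSeries

section aux

variable {S : Type*} [CommRing S] {n : ℕ}

/-- Divisibility by `C t ^ m` is coefficientwise divisibility by `t^m`. -/
lemma aux_dvd_iff (t : S) (m : ℕ) (f : MvPowerSeries (Fin n) S) :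
    (MvPowerSeries.C (σ := Fin n) (R := S) t) ^ m ∣ f ↔ ∀ d, t ^ m ∣ MvPowerSeries.coeff d f := by
  constructor
  · rintro ⟨g, rfl⟩ d
    rw [← map_pow, MvPowerSeries.coeff_C_mul]
    exact ⟨_, rfl⟩
  · intro h
    choose g hg using h
    refine ⟨(fun d => g d : MvPowerSeries (Fin n) S), ?_⟩
    ext d
    erw [← map_pow, MvPowerSeries.coeff_C_mul]
    exact hg d

end aux

section aux
variable {S : Type*} [CommRing S] [IsDomain S] [IsDiscreteValuationRing S]
    [IsAdicComplete (IsLocalRing.maximalIdeal S) S] {n : ℕ}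

omit [IsAdicComplete (IsLocalRing.maximalIdeal S) S] in
lemma aux_smod (t : S) (ht : Irreducible t) (m : ℕ) (x : S) :
    x ∈ ((IsLocalRing.maximalIdeal S) ^ m • (⊤ : Submodule S S)) ↔ t ^ m ∣ x := by
  rw [smul_eq_mul, Ideal.mul_top, ht.maximalIdeal_eq, Ideal.span_singleton_pow,
    Ideal.mem_span_singleton]

omit [IsAdicComplete (IsLocalRing.maximalIdeal S) S] in
lemma aux_haus (t : S) (ht : Irreducible t) (f : MvPowerSeries (Fin n) S)
    (h : ∀ m, (MvPowerSeries.C (σ := Fin n) (R := S) t) ^ m ∣ f) : f = 0 := by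
  ext d
  rw [map_zero]
  refine IsHausdorff.haus (inferInstance : IsHausdorff (IsLocalRing.maximalIdeal S) S) _ ?_
  intro m
  rw [SModEq.zero, aux_smod t ht]
  exact ((aux_dvd_iff t m f).mp (h m)) d

lemma aux_prec (t : S) (ht : Irreducible t) (f : ℕ → MvPowerSeries (Fin n) S)
    (h : ∀ m, (MvPowerSeries.C (σ := Fin n) (R := S) t) ^ m ∣ f (m + 1) - f m) :
    ∃ F, ∀ m, (MvPowerSeries.C (σ := Fin n) (R := S) t) ^ m ∣ F - f m := by
  have tele : ∀ a c : ℕ, ∀ d : Fin n →₀ ℕ,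
      t ^ a ∣ MvPowerSeries.coeff d (f (a + c)) - MvPowerSeries.coeff d (f a) := by
    intro a c d
    induction c with
    | zero => simp
    | succ c ih =>
        have h1 : t ^ a ∣ MvPowerSeries.coeff d (f (a + c + 1)) - MvPowerSeries.coeff d (f (a + c)) := by
          refine dvd_trans (pow_dvd_pow t (Nat.le_add_right a c)) ?_
          have := ((aux_dvd_iff t (a + c) _).mp (h (a + c))) d
          rwa [map_sub] at this
        have := dvd_add h1 ih
        rw [sub_add_sub_cancel] at this
        simpa [← Nat.add_assoc] using this
  have key : ∀ d : Fin n →₀ ℕ, ∃ L : S, ∀ m,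
      MvPowerSeries.coeff d (f m) ≡ L [SMOD ((IsLocalRing.maximalIdeal S) ^ m • (⊤ : Submodule S S))] := by
    intro d
    refine IsPrecomplete.prec (inferInstanceAs (IsPrecomplete (IsLocalRing.maximalIdeal S) S)) ?_
    intro a b hab
    rw [SModEq.sub_mem, aux_smod t ht]
    obtain ⟨c, rfl⟩ := Nat.exists_eq_add_of_le hab
    simpa [neg_sub] using (tele a c d).neg_right
  choose L hL using key
  refine ⟨(fun d => L d : MvPowerSeries (Fin n) S), ?_⟩
  intro m
  rw [aux_dvd_iff]
  intro d
  have := (hL d m).symm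
  rw [SModEq.sub_mem, aux_smod t ht] at this
  erw [map_sub]; exact this

end aux

lemma flat_smul_regular {S M : Type*} [CommRing S] [AddCommGroup M] [Module S M]
    [Module.Flat S M] {t : S} (hreg : ∀ s : S, t * s = 0 → s = 0) {m : M}
    (h : t • m = 0) : m = 0 := by
  have hinj : Function.Injective (LinearMap.lTensor M (LinearMap.lsmul S S t)) := by
    refine Module.Flat.lTensor_preserves_injective_linearMap _ ?_
    intro a b hab
    simp only [LinearMap.lsmul_apply, smul_eq_mul] at hab
    have := hreg (a - b) (by rw [mul_sub, hab, sub_self])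
    exact sub_eq_zero.mp this
  have h0 : (LinearMap.lTensor M (LinearMap.lsmul S S t)) (m ⊗ₜ[S] (1 : S)) = 0 := by
    rw [LinearMap.lTensor_tmul, LinearMap.lsmul_apply, smul_eq_mul, mul_one]
    have : m ⊗ₜ[S] t = (t • m) ⊗ₜ[S] (1 : S) := by
      rw [TensorProduct.smul_tmul, smul_eq_mul, mul_one]
    rw [this, h, TensorProduct.zero_tmul]
  have := hinj (by rw [h0, map_zero] : _ = LinearMap.lTensor M (LinearMap.lsmul S S t) 0)
  have := congrArg (TensorProduct.rid S M) this
  simpa using this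

lemma aux_combine {R ι : Type*} [CommRing R] [Fintype ι] (P E G : ι → R) (τ r' x : R) (m : ℕ)
    (h1 : x = (∑ i, P i * G i) + τ ^ m * ((∑ i, E i * G i) + τ * r')) :
    x = (∑ i, (P i + τ ^ m * E i) * G i) + τ ^ (m + 1) * r' := by
  have h2 : ∑ i, (P i + τ ^ m * E i) * G i
      = ∑ i, (P i * G i + τ ^ m * (E i * G i)) :=
    Finset.sum_congr rfl (by intros; ring)
  rw [h2, Finset.sum_add_distrib, ← Finset.mul_sum, h1]
  ring


/-- Let `S` be a complete DVR with uniformizer `t` and residue field `k`,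
let `I' ⊆ S⟦x₁,…,xₙ⟧` be an ideal with `S⟦x₁,…,xₙ⟧/I'` flat over `S`, and let
`I ⊆ k⟦x₁,…,xₙ⟧` be the image of `I'` under reduction modulo `t`, assumed to be a
finitely generated prime ideal. Then `I'` is prime. -/

theorem stmt2 (S : Type*) [CommRing S] [IsDomain S] [IsDiscreteValuationRing S]
    [IsAdicComplete (IsLocalRing.maximalIdeal S) S]
    (t : S) (ht : Irreducible t)
    (n : ℕ) (I' : Ideal (MvPowerSeries (Fin n) S))
    (hflat : Module.Flat S (MvPowerSeries (Fin n) S ⧸ I'))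
    (I : Ideal (MvPowerSeries (Fin n) (IsLocalRing.ResidueField S)))
    (hI : I = I'.map (MvPowerSeries.map (σ := Fin n) (IsLocalRing.residue S)))
    (hfg : I.FG) (hprime : I.IsPrime) :
    I'.IsPrime := by
  classical
  haveI := hflat
  obtain ⟨φ, hφdef⟩ : ∃ φ : MvPowerSeries (Fin n) S →+*
      MvPowerSeries (Fin n) (IsLocalRing.ResidueField S),
      φ = MvPowerSeries.map (σ := Fin n) (IsLocalRing.residue S) := ⟨_, rfl⟩
  obtain ⟨τ, hτdef⟩ : ∃ τ : MvPowerSeries (Fin n) S,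
      τ = MvPowerSeries.C (σ := Fin n) (R := S) t := ⟨_, rfl⟩
  rw [← hφdef] at hI
  -- t is regular on S
  have htS : ∀ s : S, t * s = 0 → s = 0 := fun s hs =>
    (mul_eq_zero.mp hs).resolve_left ht.ne_zero
  -- t is regular modulo I'
  have hreg : ∀ c : MvPowerSeries (Fin n) S, τ * c ∈ I' → c ∈ I' := by
    intro c hc
    have hsmul : t • (Ideal.Quotient.mk I' c) = Ideal.Quotient.mk I' (τ * c) := by
      rw [hτdef, ← MvPowerSeries.smul_eq_C_mul, ← Ideal.Quotient.mkₐ_eq_mk S I']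
      exact map_smul (Ideal.Quotient.mkₐ S I').toLinearMap t c
    have h0 : t • (Ideal.Quotient.mk I' c) = 0 := by
      rw [hsmul, Ideal.Quotient.eq_zero_iff_mem]; exact hc
    have := flat_smul_regular htS h0
    rwa [Ideal.Quotient.eq_zero_iff_mem] at this
  have hregpow : ∀ (m : ℕ) (c : MvPowerSeries (Fin n) S), τ ^ m * c ∈ I' → c ∈ I' := by
    intro m
    induction m with
    | zero => intro c hc; simpa using hc
    | succ m ihm =>
        intro c hc
        rw [pow_succ, mul_assoc] at hc
        exact hreg c (ihm _ hc)
  -- φ is surjective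
  have hφsurj : Function.Surjective φ := by
    rw [hφdef]
    intro f
    have : ∀ d, ∃ s : S, IsLocalRing.residue S s = MvPowerSeries.coeff d f :=
      fun d => IsLocalRing.residue_surjective _
    choose c hc using this
    refine ⟨(fun d => c d : MvPowerSeries (Fin n) S), ?_⟩
    ext d
    erw [MvPowerSeries.coeff_map]
    exact hc d
  -- kernel of φ
  have hker : ∀ a : MvPowerSeries (Fin n) S, φ a = 0 ↔ τ ∣ a := by
    intro a
    rw [hτdef, ← pow_one (MvPowerSeries.C (σ := Fin n) (R := S) t), aux_dvd_iff, hφdef]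
    constructor
    · intro h d
      have h2 : IsLocalRing.residue S (MvPowerSeries.coeff d a) = 0 := by
        have := congrArg (MvPowerSeries.coeff d) h
        rwa [MvPowerSeries.coeff_map, map_zero] at this
      rw [pow_one, ← Ideal.mem_span_singleton, ← ht.maximalIdeal_eq]
      exact (IsLocalRing.residue_eq_zero_iff _).mp h2
    · intro h
      ext d
      rw [MvPowerSeries.coeff_map, map_zero, IsLocalRing.residue_eq_zero_iff,
        ht.maximalIdeal_eq, Ideal.mem_span_singleton]
      simpa using h d
  -- membership in I translates
  have hmemI : ∀ a : MvPowerSeries (Fin n) S, φ a ∈ I ↔ ∃ b ∈ I', τ ∣ (a - b) := by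
    intro a
    constructor
    · intro h
      rw [hI] at h
      obtain ⟨b, hb, hphib⟩ := (Ideal.mem_map_iff_of_surjective φ hφsurj).mp h
      exact ⟨b, hb, (hker _).mp (by rw [map_sub, hphib, sub_self])⟩
    · rintro ⟨b, hb, hd⟩
      have h1 : φ (a - b) = 0 := (hker _).mpr hd
      have h2 : φ a = φ b := by
        have := congrArg (· + φ b) h1
        simpa [map_sub, sub_add_cancel] using this
      rw [h2, hI]
      exact Ideal.mem_map_of_mem φ hb

  -- generators of I and lifts
  obtain ⟨s, hs⟩ := hfg
  have hlift : ∀ i : {x // x ∈ s}, ∃ g : MvPowerSeries (Fin n) S, g ∈ I' ∧ φ g = (i : _) := by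
    intro i
    have hi : (i : MvPowerSeries (Fin n) (IsLocalRing.ResidueField S)) ∈ I := by
      rw [← hs]; exact Ideal.subset_span i.2
    rw [hI] at hi
    obtain ⟨b, hb, hphib⟩ := (Ideal.mem_map_iff_of_surjective φ hφsurj).mp hi
    exact ⟨b, hb, hphib⟩
  choose g hgI hgφ using hlift
  -- one division step
  have stepE : ∀ a ∈ I', ∃ h : {x // x ∈ s} → MvPowerSeries (Fin n) S,
      ∃ a', a' ∈ I' ∧ a = (∑ i, h i * g i) + τ * a' := by
    intro a ha
    have hφa : φ a ∈ I := hI ▸ Ideal.mem_map_of_mem φ ha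
    have hmem : φ a ∈ Submodule.span (MvPowerSeries (Fin n) (IsLocalRing.ResidueField S))
        (Set.range
        (fun i : {x // x ∈ s} => (i : MvPowerSeries (Fin n) (IsLocalRing.ResidueField S)))) := by
      have hrange : Set.range (fun i : {x // x ∈ s} =>
          (i : MvPowerSeries (Fin n) (IsLocalRing.ResidueField S))) = ↑s := by
        ext x; simp
      rw [hrange, Ideal.submodule_span_eq, hs]
      exact hφa
    obtain ⟨c, hc⟩ := (Submodule.mem_span_range_iff_exists_fun _).mp hmem
    choose lift hliftφ using hφsurj
    have hφdiff : φ (a - ∑ i, lift (c i) * g i) = 0 := by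
      rw [map_sub, map_sum]
      have hterm : ∀ i, φ (lift (c i) * g i) = c i •
          (i : MvPowerSeries (Fin n) (IsLocalRing.ResidueField S)) := by
        intro i
        rw [map_mul, hliftφ, hgφ, smul_eq_mul]
      rw [Finset.sum_congr rfl (fun i _ => hterm i), hc, sub_self]
    obtain ⟨a'', ha''⟩ := (hker _).mp hφdiff
    have hmem2 : τ * a'' ∈ I' := by
      rw [← ha'']
      exact I'.sub_mem ha (Ideal.sum_mem _ fun i _ => I'.mul_mem_left _ (hgI i))
    exact ⟨fun i => lift (c i), a'', hreg _ hmem2, by rw [← ha'']; ring⟩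
  -- nondependent form
  have stepE' : ∀ a : MvPowerSeries (Fin n) S,
      ∃ p : ({x // x ∈ s} → MvPowerSeries (Fin n) S) × MvPowerSeries (Fin n) S,
      a ∈ I' → (p.2 ∈ I' ∧ a = (∑ i, p.1 i * g i) + τ * p.2) := by
    intro a
    by_cases ha : a ∈ I'
    · obtain ⟨h, a', h1, h2⟩ := stepE a ha
      exact ⟨(h, a'), fun _ => ⟨h1, h2⟩⟩
    · exact ⟨(fun _ => 0, 0), fun h => absurd h ha⟩
  choose p hp using stepE'
  -- every element of I' is a combination of the g i
  have repI' : ∀ a ∈ I', ∃ u : {x // x ∈ s} → MvPowerSeries (Fin n) S,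
      a = ∑ i, u i * g i := by
    intro a ha
    let seq : ∀ m : ℕ, {q : ({x // x ∈ s} → MvPowerSeries (Fin n) S) × MvPowerSeries (Fin n) S //
        q.2 ∈ I' ∧ a = (∑ i, q.1 i * g i) + τ ^ m * q.2} := fun m =>
      Nat.rec
        ⟨⟨fun _ => 0, a⟩, ha, by simp⟩
        (fun m prev =>
          ⟨⟨fun i => prev.1.1 i + τ ^ m * (p prev.1.2).1 i, (p prev.1.2).2⟩,
            (hp prev.1.2 prev.2.1).1, by
              have h2 := (hp prev.1.2 prev.2.1).2
              refine aux_combine _ _ _ _ _ _ _ ?_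
              rw [← h2]
              exact prev.2.2⟩) m
    have hcau : ∀ i, ∀ m, τ ^ m ∣ ((seq (m + 1)).1.1 i - (seq m).1.1 i) := by
      intro i m
      have hm : (seq (m + 1)).1.1 i = (seq m).1.1 i + τ ^ m * (p (seq m).1.2).1 i := rfl
      rw [hm, add_sub_cancel_left]
      exact Dvd.intro _ rfl
    have hU := fun i => aux_prec t ht (fun m => (seq m).1.1 i) (by
      intro m
      rw [← hτdef]
      exact hcau i m)
    choose U hU using hU
    refine ⟨U, ?_⟩
    have hz : ∀ m, τ ^ m ∣ (a - ∑ i, U i * g i) := by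
      intro m
      have h1 : a - ∑ i, (seq m).1.1 i * g i = τ ^ m * (seq m).1.2 := by
        linear_combination (seq m).2.2
      have h2 : (∑ i, U i * g i) - ∑ i, (seq m).1.1 i * g i
          = ∑ i, (U i - (seq m).1.1 i) * g i := by
        rw [← Finset.sum_sub_distrib]
        exact Finset.sum_congr rfl fun i _ => (sub_mul _ _ _).symm
      have h3 : τ ^ m ∣ (∑ i, U i * g i) - ∑ i, (seq m).1.1 i * g i := by
        rw [h2]
        refine Finset.dvd_sum fun i _ => Dvd.dvd.mul_right ?_ _
        have := hU i m
        rwa [← hτdef] at this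
      have h4 : a - ∑ i, U i * g i
          = (a - ∑ i, (seq m).1.1 i * g i) - ((∑ i, U i * g i) - ∑ i, (seq m).1.1 i * g i) := by
        ring
      rw [h4, h1]
      exact dvd_sub (Dvd.intro _ rfl) h3
    have hzero := aux_haus t ht _ (fun m => by rw [← hτdef]; exact hz m)
    have := sub_eq_zero.mp hzero
    exact this

  -- nondependent representation
  have repI'' : ∀ a : MvPowerSeries (Fin n) S, ∃ u : {x // x ∈ s} → MvPowerSeries (Fin n) S,
      a ∈ I' → a = ∑ i, u i * g i := by
    intro a
    by_cases ha : a ∈ I'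
    · obtain ⟨u, hu⟩ := repI' a ha; exact ⟨u, fun _ => hu⟩
    · exact ⟨fun _ => 0, fun h => absurd h ha⟩
  choose rep hrep using repI''
  -- separation: if a is in I' modulo every power of τ, then a ∈ I'
  have sep : ∀ a : MvPowerSeries (Fin n) S,
      (∀ m : ℕ, ∃ b ∈ I', τ ^ m ∣ (a - b)) → a ∈ I' := by
    intro a hA
    have hA' : ∀ m : ℕ, ∃ q : MvPowerSeries (Fin n) S × MvPowerSeries (Fin n) S,
        q.1 ∈ I' ∧ a - q.1 = τ ^ m * q.2 := by
      intro m
      obtain ⟨b, hb, e, he⟩ := hA m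
      exact ⟨(b, e), hb, he⟩
    choose bb hbb using hA'
    let seq : ∀ m : ℕ, {q : ({x // x ∈ s} → MvPowerSeries (Fin n) S) × MvPowerSeries (Fin n) S //
        a = (∑ i, q.1 i * g i) + τ ^ m * q.2} := fun m =>
      Nat.rec
        ⟨⟨fun _ => 0, a⟩, by simp⟩
        (fun m prev =>
          ⟨⟨fun i => prev.1.1 i + τ ^ m * rep (prev.1.2 - τ * (bb (m + 1)).2) i,
            (bb (m + 1)).2⟩, by
              have hb1 := (hbb (m + 1)).1
              have hb2 := (hbb (m + 1)).2
              have hprev := prev.2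
              have hw : τ ^ m * (prev.1.2 - τ * (bb (m + 1)).2)
                  = (bb (m + 1)).1 - ∑ i, prev.1.1 i * g i := by
                linear_combination hb2 - hprev
              have hwI : (prev.1.2 - τ * (bb (m + 1)).2) ∈ I' :=
                hregpow m _ (by
                  rw [hw]
                  exact I'.sub_mem hb1
                    (Ideal.sum_mem _ fun i _ => I'.mul_mem_left _ (hgI i)))
              have hu := hrep _ hwI
              refine aux_combine _ _ _ _ _ _ _ ?_
              rw [← hu]
              linear_combination hprev⟩) m
    have hcau : ∀ i, ∀ m, τ ^ m ∣ ((seq (m + 1)).1.1 i - (seq m).1.1 i) := by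
      intro i m
      have hm : (seq (m + 1)).1.1 i = (seq m).1.1 i
          + τ ^ m * rep ((seq m).1.2 - τ * (bb (m + 1)).2) i := rfl
      rw [hm, add_sub_cancel_left]
      exact Dvd.intro _ rfl
    have hU := fun i => aux_prec t ht (fun m => (seq m).1.1 i) (by
      intro m
      rw [← hτdef]
      exact hcau i m)
    choose U hU using hU
    have hz : ∀ m, τ ^ m ∣ (a - ∑ i, U i * g i) := by
      intro m
      have h1 : a - ∑ i, (seq m).1.1 i * g i = τ ^ m * (seq m).1.2 := by
        linear_combination (seq m).2
      have h2 : (∑ i, U i * g i) - ∑ i, (seq m).1.1 i * g i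
          = ∑ i, (U i - (seq m).1.1 i) * g i := by
        rw [← Finset.sum_sub_distrib]
        exact Finset.sum_congr rfl fun i _ => (sub_mul _ _ _).symm
      have h3 : τ ^ m ∣ (∑ i, U i * g i) - ∑ i, (seq m).1.1 i * g i := by
        rw [h2]
        refine Finset.dvd_sum fun i _ => Dvd.dvd.mul_right ?_ _
        have := hU i m
        rwa [← hτdef] at this
      have h4 : a - ∑ i, U i * g i
          = (a - ∑ i, (seq m).1.1 i * g i) - ((∑ i, U i * g i) - ∑ i, (seq m).1.1 i * g i) := by
        ring
      rw [h4, h1]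
      exact dvd_sub (Dvd.intro _ rfl) h3
    have hzero := aux_haus t ht _ (fun m => by rw [← hτdef]; exact hz m)
    have ha : a = ∑ i, U i * g i := sub_eq_zero.mp hzero
    rw [ha]
    exact Ideal.sum_mem _ fun i _ => I'.mul_mem_left _ (hgI i)
  -- decomposition of elements not in I'
  have keyDecomp : ∀ a : MvPowerSeries (Fin n) S, a ∉ I' →
      ∃ (m : ℕ) (b a' : MvPowerSeries (Fin n) S), b ∈ I' ∧ a = b + τ ^ m * a' ∧
        ¬ ∃ b' ∈ I', τ ∣ (a' - b') := by
    intro a ha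
    have hex : ∃ m : ℕ, ¬ ∃ b ∈ I', τ ^ m ∣ (a - b) := by
      by_contra hc
      push_neg at hc
      exact ha (sep a (fun m => by
        obtain ⟨b, hb, hd⟩ := hc m
        exact ⟨b, hb, hd⟩))
    have hN := Nat.find_spec hex
    have hN0 : Nat.find hex ≠ 0 := by
      intro h0
      rw [h0] at hN
      exact hN ⟨0, I'.zero_mem, by simp⟩
    obtain ⟨M, hM⟩ := Nat.exists_eq_succ_of_ne_zero hN0
    have hMlt : ∃ b ∈ I', τ ^ M ∣ (a - b) := by
      by_contra hc
      have hle := Nat.find_le (h := hex) hc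
      omega
    obtain ⟨b, hb, e, he⟩ := hMlt
    refine ⟨M, b, e, hb, by linear_combination he, ?_⟩
    rintro ⟨b', hb', d, hd⟩
    apply hN
    rw [hM]
    refine ⟨b + τ ^ M * b', I'.add_mem hb (I'.mul_mem_left _ hb'), d, ?_⟩
    rw [pow_succ]
    linear_combination he + (τ : MvPowerSeries (Fin n) S) ^ M * hd
  -- conclusion
  constructor
  · intro htop
    apply hprime.ne_top
    rw [hI, htop, Ideal.map_top]
  · intro a b hab
    by_contra hcon
    push_neg at hcon
    obtain ⟨i, ba, a', hba, haeq, hna⟩ := keyDecomp a hcon.1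
    obtain ⟨j, bbb, b', hbbb, hbeq, hnb⟩ := keyDecomp b hcon.2
    have hmul : τ ^ (i + j) * (a' * b') ∈ I' := by
      have heq2 : τ ^ (i + j) * (a' * b')
          = a * b - (ba * b + τ ^ i * a' * bbb) := by
        rw [haeq, hbeq]
        ring
      rw [heq2]
      exact I'.sub_mem hab (I'.add_mem (I'.mul_mem_right _ hba)
        (I'.mul_mem_left _ hbbb))
    have hab' : a' * b' ∈ I' := hregpow _ _ hmul
    have hφmem : φ a' * φ b' ∈ I := by
      rw [← map_mul, hI]
      exact Ideal.mem_map_of_mem φ hab'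
    rcases hprime.mem_or_mem hφmem with h | h
    · exact hna ((hmemI a').mp h)
    · exact hnb ((hmemI b').mp h)
end

section
/- Let k be a field, e ≥ 3, and a₂,…,a_{e−1} ∈ ℕ with all aᵢ ≥ 2. Define, for 1 ≤ i, i+1 ≤ j−1 ≤ e−1, the polynomials g_{i,j} = xᵢxⱼ − x_{i+1}^{a_{i+1}} if j = i+2, and g_{i,j} = xᵢxⱼ − x_{i+1}^{a_{i+1}−1}(x_{i+2}^{a_{i+2}−2}⋯x_{j−2}^{a_{j−2}−2})x_{j−1}^{a_{j−1}−1} if j > i+2. Then for all indices i < j < k−1 the identity xⱼ·g_{i,k} = xᵢ·g_{j,k} + (x_{j+1}^{a_{j+1}−2}⋯x_{k−2}^{a_{k−2}−2})·x_{k−1}^{a_{k−1}−1}·g_{i,j+1} holds in the polynomial ring k[x₁,…,x_e]. -/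
private lemma prod_split {M : Type*} [CommMonoid M] (f : ℕ → M) {s t u : ℕ}
    (hst : s < t) (htu : t < u) :
    ∏ l ∈ Finset.Ioo s u, f l =
      (∏ l ∈ Finset.Ioo s t, f l) * (f t * ∏ l ∈ Finset.Ioo t u, f l) := by
  have h : Finset.Ioo s u = Finset.Ioo s t ∪ Finset.Ico t u := by
    ext x
    simp only [Finset.mem_Ioo, Finset.mem_union, Finset.mem_Ico]
    omega
  have hd : Disjoint (Finset.Ioo s t) (Finset.Ico t u) := by
    rw [Finset.disjoint_left]
    intro x hx hx'
    simp only [Finset.mem_Ioo] at hx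
    simp only [Finset.mem_Ico] at hx'
    omega
  rw [h, Finset.prod_union hd, ← Finset.Ioo_insert_left htu,
    Finset.prod_insert (by simp)]

private lemma prod_pop {M : Type*} [CommMonoid M] (f : ℕ → M) {t u : ℕ} (h : t + 1 < u) :
    ∏ l ∈ Finset.Ioo t u, f l = f (t + 1) * ∏ l ∈ Finset.Ioo (t + 1) u, f l := by
  rw [← Finset.Ico_add_one_left_eq_Ioo, ← Finset.Ioo_insert_left h, Finset.prod_insert (by simp)]

open MvPolynomial in
/-- the first generating syzygy among Riemenschneider's equations
`g_{i,j}` for a toric surface singularity. -/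
theorem stmt5 (k : Type*) [Field k] (e : ℕ) (he : 3 ≤ e)
    (a : ℕ → ℕ) (ha : ∀ l, 2 ≤ l → l ≤ e - 1 → 2 ≤ a l)
    (g : ℕ → ℕ → MvPolynomial ℕ k)
    (hg2 : ∀ i, g i (i + 2) = X i * X (i + 2) - X (i + 1) ^ a (i + 1))
    (hg3 : ∀ i j, i + 2 < j →
      g i j = X i * X j - X (i + 1) ^ (a (i + 1) - 1) *
        (∏ l ∈ Finset.Ioo (i + 1) (j - 1), X l ^ (a l - 2)) *
        X (j - 1) ^ (a (j - 1) - 1)) :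
    ∀ i j m : ℕ, 1 ≤ i → i < j → j < m - 1 → m ≤ e →
      X j * g i m =
        X i * g j m +
          (∏ l ∈ Finset.Ioo j (m - 1), X l ^ (a l - 2)) *
            X (m - 1) ^ (a (m - 1) - 1) * g i (j + 1) := by
  intro i j m hi hij hjm hme
  have haj : 2 ≤ a j := ha j (by omega) (by omega)
  have haj1 : 2 ≤ a (j + 1) := ha (j + 1) (by omega) (by omega)
  have him : i + 2 < m := by omega
  have e1 : g i m = X i * X m - X (i + 1) ^ (a (i + 1) - 1) *
      (∏ l ∈ Finset.Ioo (i + 1) (m - 1), X l ^ (a l - 2)) *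
      X (m - 1) ^ (a (m - 1) - 1) := hg3 i m him
  rcases eq_or_lt_of_le (show j + 2 ≤ m by omega) with hm2 | hm3
  · -- m = j + 2
    have e2 : g j m = X j * X m - X (j + 1) ^ a (j + 1) := by
      rw [show m = j + 2 by omega]; exact hg2 j
    have hm1 : m - 1 = j + 1 := by omega
    rcases eq_or_lt_of_le (show i + 1 ≤ j from hij) with hj2 | hj3
    · -- j = i + 1
      have e4 : g i (j + 1) = X i * X (j + 1) - X j ^ a j := by
        rw [show j = i + 1 by omega, show i + 1 + 1 = i + 2 by omega]
        exact hg2 i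
      have h1 : Finset.Ioo (i + 1) (m - 1) = ∅ := by
        ext x; simp only [Finset.mem_Ioo, Finset.notMem_empty, iff_false, not_and, not_lt]; omega
      have h2 : Finset.Ioo j (m - 1) = ∅ := by
        ext x; simp only [Finset.mem_Ioo, Finset.notMem_empty, iff_false, not_and, not_lt]; omega
      obtain ⟨p, hp⟩ : ∃ p, a j = p + 1 := ⟨a j - 1, by omega⟩
      obtain ⟨q, hq⟩ : ∃ q, a (j + 1) = q + 1 := ⟨a (j + 1) - 1, by omega⟩
      rw [e1, e2, e4, h1, h2, hm1, show i + 1 = j by omega, hp, hq]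
      simp only [Finset.prod_empty, Nat.add_sub_cancel]
      ring
    · -- i + 1 < j
      have e4 : g i (j + 1) = X i * X (j + 1) - X (i + 1) ^ (a (i + 1) - 1) *
          (∏ l ∈ Finset.Ioo (i + 1) j, X l ^ (a l - 2)) * X j ^ (a j - 1) := by
        have := hg3 i (j + 1) (by omega)
        rwa [show j + 1 - 1 = j by omega] at this
      have h4 : Finset.Ioo j (j + 1) = ∅ := by
        ext x; simp only [Finset.mem_Ioo, Finset.notMem_empty, iff_false, not_and, not_lt]; omega
      obtain ⟨p, hp⟩ : ∃ p, a j = p + 2 := ⟨a j - 2, by omega⟩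
      obtain ⟨q, hq⟩ : ∃ q, a (j + 1) = q + 1 := ⟨a (j + 1) - 1, by omega⟩
      rw [e1, e2, e4, hm1,
        prod_split (fun l => X l ^ (a l - 2)) hj3 (show j < j + 1 by omega),
        h4, hp, hq]
      simp only [Finset.prod_empty, Nat.add_sub_cancel,
        show p + 2 - 1 = p + 1 by omega, show p + 2 - 2 = p by omega]
      ring
  · -- j + 2 < m
    have e2 : g j m = X j * X m - X (j + 1) ^ (a (j + 1) - 1) *
        (∏ l ∈ Finset.Ioo (j + 1) (m - 1), X l ^ (a l - 2)) *
        X (m - 1) ^ (a (m - 1) - 1) := hg3 j m (by omega)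
    have hsplit2 : ∏ l ∈ Finset.Ioo j (m - 1), (X l : MvPolynomial ℕ k) ^ (a l - 2) =
        X (j + 1) ^ (a (j + 1) - 2) *
          ∏ l ∈ Finset.Ioo (j + 1) (m - 1), X l ^ (a l - 2) :=
      prod_pop _ (by omega)
    rcases eq_or_lt_of_le (show i + 1 ≤ j from hij) with hj2 | hj3
    · -- j = i + 1
      have e4 : g i (j + 1) = X i * X (j + 1) - X j ^ a j := by
        rw [show j = i + 1 by omega, show i + 1 + 1 = i + 2 by omega]
        exact hg2 i
      have hsplit1 : ∏ l ∈ Finset.Ioo (i + 1) (m - 1), (X l : MvPolynomial ℕ k) ^ (a l - 2) =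
          X (j + 1) ^ (a (j + 1) - 2) *
            ∏ l ∈ Finset.Ioo (j + 1) (m - 1), X l ^ (a l - 2) := by
        rw [show i + 1 = j by omega]; exact hsplit2
      obtain ⟨p, hp⟩ : ∃ p, a j = p + 1 := ⟨a j - 1, by omega⟩
      obtain ⟨q, hq⟩ : ∃ q, a (j + 1) = q + 2 := ⟨a (j + 1) - 2, by omega⟩
      rw [e1, e2, e4, hsplit1, hsplit2, show i + 1 = j by omega, hp, hq]
      simp only [Nat.add_sub_cancel, show q + 2 - 1 = q + 1 by omega,
        show q + 2 - 2 = q by omega]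
      ring
    · -- i + 1 < j
      have e4 : g i (j + 1) = X i * X (j + 1) - X (i + 1) ^ (a (i + 1) - 1) *
          (∏ l ∈ Finset.Ioo (i + 1) j, X l ^ (a l - 2)) * X j ^ (a j - 1) := by
        have := hg3 i (j + 1) (by omega)
        rwa [show j + 1 - 1 = j by omega] at this
      obtain ⟨p, hp⟩ : ∃ p, a j = p + 2 := ⟨a j - 2, by omega⟩
      obtain ⟨q, hq⟩ : ∃ q, a (j + 1) = q + 2 := ⟨a (j + 1) - 2, by omega⟩
      rw [e1, e2, e4,
        prod_split (fun l => X l ^ (a l - 2)) hj3 (show j < m - 1 by omega),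
        prod_pop (fun l => X l ^ (a l - 2)) (show j + 1 < m - 1 by omega),
        hp, hq]
      simp only [show p + 2 - 1 = p + 1 by omega, show p + 2 - 2 = p by omega,
        show q + 2 - 1 = q + 1 by omega, show q + 2 - 2 = q by omega]
      ring
end

section
/- With the notation of Riemenschneider's equations g_{i,j} for data a₂,…,a_{e−1} with all aᵢ ≥ 2, for all indices with i+1 < j < k the identity xⱼ·g_{i,k} = x_k·g_{i,j} + x_{i+1}^{a_{i+1}−1}(x_{i+2}^{a_{i+2}−2}⋯x_{j−1}^{a_{j−1}−2})·g_{j−1,k} holds in the polynomial ring k[x₁,…,x_e]. -/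
open MvPolynomial in
/-- the second generating syzygy among Riemenschneider's equations
`g_{i,j}` for a toric surface singularity. -/
theorem stmt6 (k : Type*) [Field k] (e : ℕ) (he : 3 ≤ e)
    (a : ℕ → ℕ) (ha : ∀ l, 2 ≤ l → l ≤ e - 1 → 2 ≤ a l)
    (g : ℕ → ℕ → MvPolynomial ℕ k)
    (hg2 : ∀ i, g i (i + 2) = X i * X (i + 2) - X (i + 1) ^ a (i + 1))
    (hg3 : ∀ i j, i + 2 < j →
      g i j = X i * X j - X (i + 1) ^ (a (i + 1) - 1) *
        (∏ l ∈ Finset.Ioo (i + 1) (j - 1), X l ^ (a l - 2)) *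
        X (j - 1) ^ (a (j - 1) - 1)) :
    ∀ i j m : ℕ, 1 ≤ i → i + 1 < j → j < m → m ≤ e →
      X j * g i m =
        X m * g i j +
          X (i + 1) ^ (a (i + 1) - 1) *
            (∏ l ∈ Finset.Ioo (i + 1) j, X l ^ (a l - 2)) * g (j - 1) m := by
  intro i j m hi hij hjm hme
  obtain ⟨A, hA⟩ : ∃ A, a (i + 1) = A + 2 :=
    ⟨a (i + 1) - 2, by have := ha (i + 1) (by omega) (by omega); omega⟩
  obtain ⟨D, hD⟩ : ∃ D, a j = D + 2 :=
    ⟨a j - 2, by have := ha j (by omega) (by omega); omega⟩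
  rcases eq_or_lt_of_le (show i + 2 ≤ j from hij) with hj | hj
  · -- j = i + 2
    subst hj
    have hE : Finset.Ioo (i + 1) (i + 2) = (∅ : Finset ℕ) := by
      ext x; simp; omega
    rcases eq_or_lt_of_le (show i + 3 ≤ m by omega) with hm | hm
    · -- m = i + 3
      subst hm
      have h1 : g i (i + 3) = X i * X (i + 3) - X (i + 1) ^ (A + 1) * X (i + 2) ^ (D + 1) := by
        rw [hg3 i (i + 3) (by omega), show i + 3 - 1 = i + 2 from rfl, hE,
          Finset.prod_empty, hA, hD, show A + 2 - 1 = A + 1 from rfl,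
          show D + 2 - 1 = D + 1 from rfl]
        ring
      have h3 : g (i + 1) (i + 3) = X (i + 1) * X (i + 3) - X (i + 2) ^ (D + 2) := by
        have := hg2 (i + 1)
        rwa [show i + 1 + 2 = i + 3 from rfl, show i + 1 + 1 = i + 2 from rfl, hD] at this
      rw [h1, hg2 i, show i + 2 - 1 = i + 1 from rfl, h3, hE, Finset.prod_empty, hA,
        show A + 2 - 1 = A + 1 from rfl]
      ring
    · -- m > i + 3
      have h1 : g i m = X i * X m - X (i + 1) ^ (A + 1) *
          (∏ l ∈ Finset.Ioo (i + 1) (m - 1), X l ^ (a l - 2)) * X (m - 1) ^ (a (m - 1) - 1) := by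
        rw [hg3 i m (by omega), hA, show A + 2 - 1 = A + 1 from rfl]
      have h3 : g (i + 1) m = X (i + 1) * X m - X (i + 2) ^ (D + 1) *
          (∏ l ∈ Finset.Ioo (i + 2) (m - 1), X l ^ (a l - 2)) * X (m - 1) ^ (a (m - 1) - 1) := by
        have := hg3 (i + 1) m (by omega)
        rwa [show i + 1 + 1 = i + 2 from rfl, hD, show D + 2 - 1 = D + 1 from rfl] at this
      have hsplit : (∏ l ∈ Finset.Ioo (i + 1) (m - 1), X l ^ (a l - 2) : MvPolynomial ℕ k) =
          X (i + 2) ^ D * ∏ l ∈ Finset.Ioo (i + 2) (m - 1), X l ^ (a l - 2) := by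
        rw [show Finset.Ioo (i + 1) (m - 1) = insert (i + 2) (Finset.Ioo (i + 2) (m - 1)) from by
            ext x; simp; omega,
          Finset.prod_insert (by simp), hD, show D + 2 - 2 = D from rfl]
      rw [h1, hg2 i, show i + 2 - 1 = i + 1 from rfl, h3, hE, Finset.prod_empty, hA,
        show A + 2 - 1 = A + 1 from rfl, hsplit]
      ring
  · -- j > i + 2
    obtain ⟨C, hC⟩ : ∃ C, a (j - 1) = C + 2 :=
      ⟨a (j - 1) - 2, by have := ha (j - 1) (by omega) (by omega); omega⟩
    have hgij : g i j = X i * X j - X (i + 1) ^ (A + 1) *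
        (∏ l ∈ Finset.Ioo (i + 1) (j - 1), X l ^ (a l - 2)) * X (j - 1) ^ (C + 1) := by
      rw [hg3 i j (by omega), hA, hC, show A + 2 - 1 = A + 1 from rfl,
        show C + 2 - 1 = C + 1 from rfl]
    have hsplit2 : (∏ l ∈ Finset.Ioo (i + 1) j, X l ^ (a l - 2) : MvPolynomial ℕ k) =
        (∏ l ∈ Finset.Ioo (i + 1) (j - 1), X l ^ (a l - 2)) * X (j - 1) ^ C := by
      rw [show Finset.Ioo (i + 1) j = insert (j - 1) (Finset.Ioo (i + 1) (j - 1)) from by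
          ext x; simp; omega,
        Finset.prod_insert (by simp), hC, show C + 2 - 2 = C from rfl]
      ring
    rcases eq_or_lt_of_le (show j + 1 ≤ m by omega) with hm | hm
    · -- m = j + 1
      subst hm
      have h1 : g i (j + 1) = X i * X (j + 1) - X (i + 1) ^ (A + 1) *
          (∏ l ∈ Finset.Ioo (i + 1) j, X l ^ (a l - 2)) * X j ^ (D + 1) := by
        rw [hg3 i (j + 1) (by omega), show j + 1 - 1 = j from rfl, hA, hD,
          show A + 2 - 1 = A + 1 from rfl, show D + 2 - 1 = D + 1 from rfl]
      have h3 : g (j - 1) (j + 1) = X (j - 1) * X (j + 1) - X j ^ (D + 2) := by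
        have := hg2 (j - 1)
        rwa [show j - 1 + 2 = j + 1 by omega, show j - 1 + 1 = j by omega, hD] at this
      rw [h1, hgij, h3, hsplit2, hA, show A + 2 - 1 = A + 1 from rfl]
      ring
    · -- m > j + 1
      have h1 : g i m = X i * X m - X (i + 1) ^ (A + 1) *
          (∏ l ∈ Finset.Ioo (i + 1) (m - 1), X l ^ (a l - 2)) * X (m - 1) ^ (a (m - 1) - 1) := by
        rw [hg3 i m (by omega), hA, show A + 2 - 1 = A + 1 from rfl]
      have h3 : g (j - 1) m = X (j - 1) * X m - X j ^ (D + 1) *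
          (∏ l ∈ Finset.Ioo j (m - 1), X l ^ (a l - 2)) * X (m - 1) ^ (a (m - 1) - 1) := by
        have := hg3 (j - 1) m (by omega)
        rwa [show j - 1 + 1 = j by omega, hD, show D + 2 - 1 = D + 1 from rfl] at this
      have hsplit : (∏ l ∈ Finset.Ioo (i + 1) (m - 1), X l ^ (a l - 2) : MvPolynomial ℕ k) =
          (∏ l ∈ Finset.Ioo (i + 1) (j - 1), X l ^ (a l - 2)) * X (j - 1) ^ C * X j ^ D *
            (∏ l ∈ Finset.Ioo j (m - 1), X l ^ (a l - 2)) := by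
        rw [show Finset.Ioo (i + 1) (m - 1) =
            Finset.Ioo (i + 1) (j - 1) ∪ ({j - 1, j} ∪ Finset.Ioo j (m - 1)) from by
            ext x; simp; omega,
          Finset.prod_union (by
            rw [Finset.disjoint_left]; intro x hx hx2
            simp only [Finset.mem_union, Finset.mem_insert, Finset.mem_singleton,
              Finset.mem_Ioo] at hx hx2
            omega),
          Finset.prod_union (by
            rw [Finset.disjoint_left]; intro x hx hx2
            simp only [Finset.mem_insert, Finset.mem_singleton, Finset.mem_Ioo] at hx hx2
            omega),
          Finset.prod_pair (by omega), hC, hD, show C + 2 - 2 = C from rfl,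
          show D + 2 - 2 = D from rfl]
        ring
      rw [h1, hgij, h3, hsplit2, hsplit, hA, show A + 2 - 1 = A + 1 from rfl]
      ring
end

section
/- Let k be a field and let I ⊆ k⟦x₁,…,x_e⟧ be a prime ideal of height e−2 such that xᵢ ∈ I for some i with 2 ≤ i ≤ e−1, and such that x_{i−1}x_{i+1} − xᵢ^{aᵢ} ∈ I for all i = 2,…,e−1 with aᵢ ≥ 2. Then I = (x₂,…,x_{e−1}). -/
set_option maxHeartbeats 1000000

open MvPowerSeries Finsupp

section Aux

variable {σ : Type*} [DecidableEq σ] [LinearOrder σ] {k : Type*} [Field k]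

open Classical in
/-- The ring hom killing all monomials that involve a variable from `S`. -/
noncomputable def killVars (S : Finset σ) :
    MvPowerSeries σ k →+* MvPowerSeries σ k where
  toFun f := fun d => if ∀ i ∈ S, d i = 0 then f d else 0
  map_one' := by
    ext d
    show (if ∀ i ∈ S, d i = 0 then (1 : MvPowerSeries σ k) d else 0) = (1 : MvPowerSeries σ k) d
    split_ifs with h
    · rfl
    · push_neg at h
      obtain ⟨i, hiS, hi⟩ := h
      rw [show (1 : MvPowerSeries σ k) d = MvPowerSeries.coeff d 1 from rfl,
        MvPowerSeries.coeff_one, if_neg]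
      intro hd
      exact hi (by simp [hd])
  map_mul' f g := by
    ext d
    erw [MvPowerSeries.coeff_mul]
    show (if ∀ i ∈ S, d i = 0 then (f * g) d else 0) = ∑ p ∈ Finset.HasAntidiagonal.antidiagonal d,
      (if ∀ i ∈ S, p.1 i = 0 then f p.1 else 0) * (if ∀ i ∈ S, p.2 i = 0 then g p.2 else 0)
    split_ifs with h
    · rw [show (f * g) d = MvPowerSeries.coeff d (f * g) from rfl,
        MvPowerSeries.coeff_mul]
      refine Finset.sum_congr rfl fun p hp => ?_
      rw [Finset.HasAntidiagonal.mem_antidiagonal] at hp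
      have h1 : ∀ i ∈ S, p.1 i = 0 := by
        intro i hi
        have := h i hi
        rw [← hp] at this
        simp only [Finsupp.add_apply] at this
        omega
      have h2 : ∀ i ∈ S, p.2 i = 0 := by
        intro i hi
        have := h i hi
        rw [← hp] at this
        simp only [Finsupp.add_apply] at this
        omega
      simp only [MvPowerSeries.coeff_apply]
      rw [if_pos h1, if_pos h2]
    · push_neg at h
      obtain ⟨i, hiS, hi⟩ := h
      refine (Finset.sum_eq_zero fun p hp => ?_).symm
      rw [Finset.HasAntidiagonal.mem_antidiagonal] at hp
      have : p.1 i ≠ 0 ∨ p.2 i ≠ 0 := by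
        by_contra hc
        push_neg at hc
        apply hi
        rw [← hp]
        simp [hc.1, hc.2]
      rcases this with h1 | h2
      · rw [if_neg (show ¬∀ i' ∈ S, p.1 i' = 0 from fun hall => h1 (hall i hiS)), zero_mul]
      · rw [if_neg (show ¬∀ i' ∈ S, p.2 i' = 0 from fun hall => h2 (hall i hiS)), mul_zero]
  map_zero' := by
    ext d
    show (if ∀ i ∈ S, d i = 0 then (0 : MvPowerSeries σ k) d else 0) = (0 : MvPowerSeries σ k) d
    split_ifs <;> rfl
  map_add' f g := by
    ext d
    show (if ∀ i ∈ S, d i = 0 then (f + g) d else 0) =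
      (if ∀ i ∈ S, d i = 0 then f d else 0) + (if ∀ i ∈ S, d i = 0 then g d else 0)
    split_ifs with h
    · rfl
    · rw [add_zero]

open Classical in
lemma coeff_killVars (S : Finset σ) (f : MvPowerSeries σ k) (d : σ →₀ ℕ) :
    MvPowerSeries.coeff d (killVars S f) =
      if ∀ i ∈ S, d i = 0 then MvPowerSeries.coeff d f else 0 := rfl

lemma killVars_eq_zero_iff (S : Finset σ) (f : MvPowerSeries σ k) :
    killVars S f = 0 ↔ ∀ d : σ →₀ ℕ, (∀ i ∈ S, d i = 0) → MvPowerSeries.coeff d f = 0 := by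
  classical
  constructor
  · intro h d hd
    have := congrArg (MvPowerSeries.coeff d) h
    rw [coeff_killVars, if_pos hd, map_zero] at this
    exact this
  · intro h
    ext d
    rw [coeff_killVars, map_zero]
    split_ifs with hd
    · exact h d hd
    · rfl

lemma mem_span_X_iff (S : Finset σ) (f : MvPowerSeries σ k) :
    f ∈ Ideal.span {g : MvPowerSeries σ k | ∃ i ∈ S, g = X i} ↔ killVars S f = 0 := by
  classical
  constructor
  · intro hf
    have hsub : Ideal.span {g : MvPowerSeries σ k | ∃ i ∈ S, g = X i} ≤
        RingHom.ker (killVars (k := k) S) := by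
      rw [Ideal.span_le]
      rintro g ⟨i, hiS, rfl⟩
      rw [SetLike.mem_coe, RingHom.mem_ker, killVars_eq_zero_iff]
      intro d hd
      rw [MvPowerSeries.coeff_X, if_neg]
      intro hds
      have := hd i hiS
      rw [hds] at this
      simp at this
    exact hsub hf
  · intro hf
    rw [killVars_eq_zero_iff] at hf
    -- write f = ∑ i ∈ S, X i * g i
    set g : σ → MvPowerSeries σ k := fun i d =>
      if ∀ i' ∈ S, i' < i → d i' = 0 then f (d + Finsupp.single i 1) else 0 with hg
    have hcg : ∀ (i : σ) (d : σ →₀ ℕ), MvPowerSeries.coeff d (g i) =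
        if ∀ i' ∈ S, i' < i → d i' = 0 then
          MvPowerSeries.coeff (d + Finsupp.single i 1) f else 0 := fun i d => rfl
    have key : f = ∑ i ∈ S, X i * g i := by
      ext d
      rw [map_sum]
      by_cases hd : ∀ i ∈ S, d i = 0
      · rw [hf d hd]
        refine (Finset.sum_eq_zero fun i hi => ?_).symm
        rw [X_def, MvPowerSeries.coeff_monomial_mul, if_neg]
        intro hle
        have := hle i
        rw [Finsupp.single_apply, if_pos rfl] at this
        have := hd i hi
        omega
      · push_neg at hd
        set T : Finset σ := S.filter (fun i => d i ≠ 0) with hT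
        have hTne : T.Nonempty := by
          obtain ⟨i, hiS, hi⟩ := hd
          exact ⟨i, by simp [hT, hiS, hi]⟩
        set i0 := T.min' hTne with hi0
        have hi0T : i0 ∈ T := T.min'_mem hTne
        have hi0S : i0 ∈ S := (Finset.mem_filter.1 hi0T).1
        have hi0d : d i0 ≠ 0 := (Finset.mem_filter.1 hi0T).2
        rw [Finset.sum_eq_single_of_mem i0 hi0S]
        · rw [X_def, MvPowerSeries.coeff_monomial_mul, if_pos, one_mul, hcg, if_pos,
            tsub_add_cancel_of_le]
          · rwa [Finsupp.single_le_iff, Nat.one_le_iff_ne_zero]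
          · intro i' hi'S hi'lt
            rw [Finsupp.tsub_apply, Finsupp.single_apply, if_neg (hi'lt.ne'), tsub_zero]
            by_contra hne
            have : i' ∈ T := Finset.mem_filter.2 ⟨hi'S, hne⟩
            exact absurd (T.min'_le i' this) (not_le.2 hi'lt)
          · rwa [Finsupp.single_le_iff, Nat.one_le_iff_ne_zero]
        · intro i hiS hne
          rw [X_def, MvPowerSeries.coeff_monomial_mul]
          split_ifs with hle
          · rw [one_mul, hcg, if_neg]
            intro hall
            have hdi : d i ≠ 0 := by
              have := Finsupp.single_le_iff.1 hle
              omega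
            have hiT : i ∈ T := Finset.mem_filter.2 ⟨hiS, hdi⟩
            have h0le : i0 ≤ i := T.min'_le i hiT
            have h0lt : i0 < i := lt_of_le_of_ne h0le (fun h => hne h.symm)
            have := hall i0 hi0S h0lt
            rw [Finsupp.tsub_apply, Finsupp.single_apply, if_neg (h0lt.ne'), tsub_zero] at this
            exact hi0d this
          · rfl
    rw [key]
    refine Ideal.sum_mem _ fun i hi => ?_
    exact Ideal.mul_mem_right _ _ (Ideal.subset_span ⟨i, hi, rfl⟩)

lemma span_X_isPrime (S : Finset σ) :
    (Ideal.span {g : MvPowerSeries σ k | ∃ i ∈ S, g = X i}).IsPrime := by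
  classical
  constructor
  · intro h
    have h1 : (1 : MvPowerSeries σ k) ∈
        Ideal.span {g : MvPowerSeries σ k | ∃ i ∈ S, g = X i} := h ▸ Submodule.mem_top
    rw [mem_span_X_iff, map_one] at h1
    exact one_ne_zero h1
  · intro f g hfg
    rw [mem_span_X_iff] at hfg ⊢
    rw [mem_span_X_iff (f := g)]
    rw [map_mul] at hfg
    exact mul_eq_zero.1 hfg

lemma X_not_mem_span (S : Finset σ) {j : σ} (hj : j ∉ S) :
    (X j : MvPowerSeries σ k) ∉ Ideal.span {g : MvPowerSeries σ k | ∃ i ∈ S, g = X i} := by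
  classical
  rw [mem_span_X_iff, killVars_eq_zero_iff]
  push_neg
  refine ⟨Finsupp.single j 1, fun i hi => ?_, ?_⟩
  · rw [Finsupp.single_apply, if_neg]
    rintro rfl
    exact hj hi
  · rw [MvPowerSeries.coeff_index_single_self_X]
    exact one_ne_zero

lemma X_mk_eq {e : ℕ} {R : Type*} [CommRing R] (m n : ℕ) (hm : m < e) (hn : n < e)
    (h : m = n) : (X (⟨m, hm⟩ : Fin e) : MvPowerSeries (Fin e) R) = X ⟨n, hn⟩ := by
  subst h; rfl

end Aux

open MvPowerSeries in
/-- first case of the classification theorem.  A prime ideal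
`I ⊆ k⟦x₁,…,x_e⟧` of height `e−2` containing the toric binomials
`x_{i−1}x_{i+1} − xᵢ^{aᵢ}` and containing one of the middle variables equals
`(x₂,…,x_{e−1})`.  (Variables are indexed `0,…,e−1`, so the middle variables are
those with index `1 ≤ i ≤ e−2`.) -/
theorem stmt8 (k : Type*) [Field k] (e : ℕ) (he : 3 ≤ e)
    (a : ℕ → ℕ) (ha : ∀ i, 1 ≤ i → i ≤ e - 2 → 2 ≤ a i)
    (I : Ideal (MvPowerSeries (Fin e) k)) (hprime : I.IsPrime)
    (hheight : Order.height (⟨I, hprime⟩ : PrimeSpectrum (MvPowerSeries (Fin e) k)) =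
      ((e - 2 : ℕ) : ℕ∞))
    (hrel : ∀ i : ℕ, ∀ h1 : 1 ≤ i, ∀ h2 : i ≤ e - 2,
      X (⟨i - 1, by omega⟩ : Fin e) * X (⟨i + 1, by omega⟩ : Fin e) -
        X (⟨i, by omega⟩ : Fin e) ^ a i ∈ I)
    (hvar : ∃ i : ℕ, ∃ h1 : 1 ≤ i, ∃ h2 : i ≤ e - 2,
      X (⟨i, by omega⟩ : Fin e) ∈ I) :
    I = Ideal.span {f : MvPowerSeries (Fin e) k |
      ∃ i : Fin e, 1 ≤ (i : ℕ) ∧ (i : ℕ) ≤ e - 2 ∧ f = X i} := by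
  classical
  set R := MvPowerSeries (Fin e) k
  -- Step 1: if a neighbor of a middle variable lies in I, so does the variable.
  have key : ∀ i : ℕ, ∀ (h1 : 1 ≤ i) (h2 : i ≤ e - 2),
      ((X (⟨i - 1, by omega⟩ : Fin e) : R) ∈ I ∨ (X (⟨i + 1, by omega⟩ : Fin e) : R) ∈ I) →
      (X (⟨i, by omega⟩ : Fin e) : R) ∈ I := by
    intro i h1 h2 hnb
    have hmul : (X (⟨i - 1, by omega⟩ : Fin e) : R) * X (⟨i + 1, by omega⟩ : Fin e) ∈ I := by
      rcases hnb with h | h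
      · exact Ideal.mul_mem_right _ _ h
      · exact Ideal.mul_mem_left _ _ h
    have hpow : (X (⟨i, by omega⟩ : Fin e) : R) ^ a i ∈ I := by
      have heq : (X (⟨i, by omega⟩ : Fin e) : R) ^ a i =
          X (⟨i - 1, by omega⟩ : Fin e) * X (⟨i + 1, by omega⟩ : Fin e) -
            (X (⟨i - 1, by omega⟩ : Fin e) * X (⟨i + 1, by omega⟩ : Fin e) -
              X (⟨i, by omega⟩ : Fin e) ^ a i) := by ring
      rw [heq]
      exact Ideal.sub_mem _ hmul (hrel i h1 h2)
    exact (hprime.pow_mem_iff_mem (a i) (by have := ha i h1 h2; omega)).1 hpow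
  -- Step 2: all middle variables lie in I.
  obtain ⟨i0, hi01, hi02, hXi0⟩ := hvar
  have down : ∀ d : ℕ, ∀ hd : d ≤ i0 - 1, (X (⟨i0 - d, by omega⟩ : Fin e) : R) ∈ I := by
    intro d
    induction d with
    | zero =>
      intro _
      have heq : (X (⟨i0 - 0, by omega⟩ : Fin e) : R) = X ⟨i0, by omega⟩ :=
        X_mk_eq _ _ _ _ (by omega)
      rw [heq]
      exact hXi0
    | succ d ih =>
      intro hd
      have hih := ih (by omega)
      refine key (i0 - (d + 1)) (by omega) (by omega) (Or.inr ?_)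
      have : (X (⟨i0 - (d + 1) + 1, by omega⟩ : Fin e) : R) = X ⟨i0 - d, by omega⟩ :=
        X_mk_eq _ _ _ _ (by omega)
      rw [this]
      exact hih
  have up : ∀ d : ℕ, ∀ hd : i0 + d ≤ e - 2, (X (⟨i0 + d, by omega⟩ : Fin e) : R) ∈ I := by
    intro d
    induction d with
    | zero =>
      intro _
      have heq : (X (⟨i0 + 0, by omega⟩ : Fin e) : R) = X ⟨i0, by omega⟩ :=
        X_mk_eq _ _ _ _ (by omega)
      rw [heq]
      exact hXi0
    | succ d ih =>
      intro hd
      have hih := ih (by omega)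
      refine key (i0 + (d + 1)) (by omega) (by omega) (Or.inl ?_)
      have : (X (⟨i0 + (d + 1) - 1, by omega⟩ : Fin e) : R) = X ⟨i0 + d, by omega⟩ :=
        X_mk_eq _ _ _ _ (by omega)
      rw [this]
      exact hih
  have allmid : ∀ j : ℕ, ∀ (h1 : 1 ≤ j) (h2 : j ≤ e - 2), (X (⟨j, by omega⟩ : Fin e) : R) ∈ I := by
    intro j h1 h2
    rcases le_or_gt j i0 with h | h
    · have := down (i0 - j) (by omega)
      rwa [X_mk_eq (i0 - (i0 - j)) j (by omega) (by omega) (by omega)] at this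
    · have := up (j - i0) (by omega)
      rwa [X_mk_eq (i0 + (j - i0)) j (by omega) (by omega) (by omega)] at this
  -- Step 3: J ≤ I.
  set J : Ideal R := Ideal.span {f : R | ∃ i : Fin e, 1 ≤ (i : ℕ) ∧ (i : ℕ) ≤ e - 2 ∧ f = X i}
    with hJ
  have hJI : J ≤ I := by
    rw [hJ, Ideal.span_le]
    rintro f ⟨i, hi1, hi2, rfl⟩
    have := allmid (i : ℕ) hi1 hi2
    rwa [show (⟨(i : ℕ), by omega⟩ : Fin e) = i from Fin.eta i _] at this
  -- Step 4: height argument forces equality.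
  by_contra hne
  have hne' : J ≠ I := fun h => hne h.symm
  have hJIlt : J < I := lt_of_le_of_ne hJI hne'
  -- the chain of prime ideals
  set Sm : ℕ → Finset (Fin e) := fun m =>
    Finset.univ.filter (fun i : Fin e => 1 ≤ (i : ℕ) ∧ (i : ℕ) ≤ m) with hSm
  set P : ℕ → Ideal R := fun m => Ideal.span {g : R | ∃ i ∈ Sm m, g = X i} with hP
  have hPprime : ∀ m, (P m).IsPrime := fun m => span_X_isPrime (Sm m)
  have hset : {g : R | ∃ i ∈ Sm (e - 2), g = X i} =
      {f : R | ∃ i : Fin e, 1 ≤ (i : ℕ) ∧ (i : ℕ) ≤ e - 2 ∧ f = X i} := by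
    ext f
    simp only [Set.mem_setOf_eq, hSm, Finset.mem_filter, Finset.mem_univ, true_and]
    constructor
    · rintro ⟨i, ⟨h1, h2⟩, rfl⟩; exact ⟨i, h1, h2, rfl⟩
    · rintro ⟨i, h1, h2, rfl⟩; exact ⟨i, ⟨h1, h2⟩, rfl⟩
  have hPJ : P (e - 2) = J := by
    rw [hP, hJ]
    exact congrArg Ideal.span hset
  have hPmono : ∀ m : ℕ, m + 1 ≤ e - 2 → P m < P (m + 1) := by
    intro m hm
    constructor
    · apply Ideal.span_mono
      rintro g ⟨i, hi, rfl⟩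
      refine ⟨i, ?_, rfl⟩
      simp only [hSm, Finset.mem_filter, Finset.mem_univ, true_and] at hi ⊢
      omega
    · intro hle
      have hXmem : (X (⟨m + 1, by omega⟩ : Fin e) : R) ∈ P (m + 1) := by
        apply Ideal.subset_span
        refine ⟨⟨m + 1, by omega⟩, ?_, rfl⟩
        simp only [hSm, Finset.mem_filter, Finset.mem_univ, true_and]
        omega
      have hXnot : (X (⟨m + 1, by omega⟩ : Fin e) : R) ∉ P m := by
        apply X_not_mem_span
        simp only [hSm, Finset.mem_filter, Finset.mem_univ, true_and]
        omega
      exact hXnot (hle hXmem)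
  -- build the LTSeries
  let chain : LTSeries (PrimeSpectrum R) :=
    { length := e - 1
      toFun := fun n => if h : (n : ℕ) = e - 1 then ⟨I, hprime⟩ else ⟨P n, hPprime n⟩
      step := by
        intro n
        dsimp only
        have hn : (n : ℕ) < e - 1 := n.isLt
        simp only [Fin.coe_castSucc, Fin.val_succ]
        by_cases hlast : (n : ℕ) + 1 = e - 1
        · rw [dif_neg (show ¬(n : ℕ) = e - 1 by omega), dif_pos hlast, Set.mem_setOf_eq,
            ← PrimeSpectrum.asIdeal_lt_asIdeal]
          show P (n : ℕ) < I
          have hne2 : (n : ℕ) = e - 2 := by omega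
          rw [hne2, hPJ]
          exact hJIlt
        · rw [dif_neg (show ¬(n : ℕ) = e - 1 by omega),
            dif_neg (show ¬(n : ℕ) + 1 = e - 1 by omega), Set.mem_setOf_eq,
            ← PrimeSpectrum.asIdeal_lt_asIdeal]
          show P (n : ℕ) < P ((n : ℕ) + 1)
          exact hPmono n (by omega) }
  have hlast : chain.last = ⟨I, hprime⟩ := by
    show (if h : ((Fin.last (e - 1) : Fin (e - 1 + 1)) : ℕ) = e - 1 then _ else _ :
      PrimeSpectrum R) = _
    rw [dif_pos (by simp)]
  have hle := Order.length_le_height_last (p := chain)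
  rw [hlast, hheight] at hle
  have hlen : chain.length = e - 1 := rfl
  rw [hlen] at hle
  have : (e - 1 : ℕ) ≤ (e - 2 : ℕ) := by exact_mod_cast hle
  omega
end
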